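/- Let g be a d×d unitary matrix with eigenvalues e^{iφ_j}, all φ_j ∈ (-π, π). For θ ∈ (0,1], the matrix F_θ(g) = ((1-θ)I + (1+θ)g)·((1+θ)I + (1-θ)g)⁻¹ is well-defined (the inverse exists), is unitary, and satisfies F_1(g) = g; moreover each eigenvalue of F_θ(g) equals (1 + iθ tan(φ_j/2))/(1 - iθ tan(φ_j/2)). -/

import Mathlib

open Matrix Complex

lemma one_sub_mul_I_ne (x : ℝ) : (1:ℂ) - (x:ℂ) * Complex.I ≠ 0 := by
  intro hcon
  have := congrArg Complex.re hcon
  simp at this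

lemma one_add_mul_I_ne (x : ℝ) : (1:ℂ) + (x:ℂ) * Complex.I ≠ 0 := by
  intro hcon
  have := congrArg Complex.re hcon
  simp at this
lemma exp_eq_cayley (φ : ℝ) (hφ : φ ∈ Set.Ioo (-Real.pi) Real.pi) :
    Complex.exp ((φ:ℂ) * Complex.I) =
      (1 + (Real.tan (φ/2) : ℂ) * Complex.I) / (1 - (Real.tan (φ/2) : ℂ) * Complex.I) := by
  have hc : 0 < Real.cos (φ/2) :=
    Real.cos_pos_of_mem_Ioo ⟨by linarith [hφ.1], by linarith [hφ.2]⟩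
  have hpyth : ((Real.cos (φ/2) : ℂ))^2 + ((Real.sin (φ/2) : ℂ))^2 = 1 := by
    push_cast
    exact Complex.cos_sq_add_sin_sq _
  have ht : Real.tan (φ/2) = Real.sin (φ/2) / Real.cos (φ/2) := Real.tan_eq_sin_div_cos _
  have hcne : ((Real.cos (φ/2) : ℝ) : ℂ) ≠ 0 := by exact_mod_cast hc.ne'
  have hE : Complex.exp ((φ:ℂ) * Complex.I)
      = ((Real.cos (φ/2) : ℂ) + (Real.sin (φ/2) : ℂ) * Complex.I)^2 := by
    have h2 : (φ:ℂ) * Complex.I = (↑(φ/2)) * Complex.I + (↑(φ/2)) * Complex.I := by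
      push_cast; ring
    rw [h2, Complex.exp_add, Complex.exp_mul_I, ← Complex.ofReal_cos, ← Complex.ofReal_sin, sq]
  rw [hE, ht, eq_div_iff (one_sub_mul_I_ne _), Complex.ofReal_div]
  have hI : (Complex.I)^2 = -1 := Complex.I_sq
  generalize ((Real.cos (φ/2) : ℝ) : ℂ) = c at hpyth hcne ⊢
  generalize ((Real.sin (φ/2) : ℝ) : ℂ) = s at hpyth ⊢
  field_simp
  linear_combination (c + s * Complex.I) * hpyth
    - s^2 * (c + s * Complex.I) * hI
lemma scalar_main (θ : ℝ) (φ : ℝ) (hφ : φ ∈ Set.Ioo (-Real.pi) Real.pi) :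
    (((1+θ:ℝ):ℂ) + ((1-θ:ℝ):ℂ) * Complex.exp ((φ:ℂ) * Complex.I)) ≠ 0 ∧
    (((1-θ:ℝ):ℂ) + ((1+θ:ℝ):ℂ) * Complex.exp ((φ:ℂ) * Complex.I)) *
      (((1+θ:ℝ):ℂ) + ((1-θ:ℝ):ℂ) * Complex.exp ((φ:ℂ) * Complex.I))⁻¹ =
      (1 + ((θ * Real.tan (φ/2) : ℝ):ℂ) * Complex.I) /
        (1 - ((θ * Real.tan (φ/2) : ℝ):ℂ) * Complex.I) := by
  have hexp := exp_eq_cayley φ hφ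
  set t := Real.tan (φ/2) with hts
  have h1 : (1:ℂ) - (t:ℂ) * Complex.I ≠ 0 := one_sub_mul_I_ne t
  have hrelden : (((1+θ:ℝ):ℂ) + ((1-θ:ℝ):ℂ) * Complex.exp ((φ:ℂ) * Complex.I)) *
      ((1:ℂ) - (t:ℂ) * Complex.I) = 2 * (1 - ((θ * t : ℝ):ℂ) * Complex.I) := by
    rw [hexp]
    push_cast
    field_simp
    ring
  have hrelnum : (((1-θ:ℝ):ℂ) + ((1+θ:ℝ):ℂ) * Complex.exp ((φ:ℂ) * Complex.I)) *
      ((1:ℂ) - (t:ℂ) * Complex.I) = 2 * (1 + ((θ * t : ℝ):ℂ) * Complex.I) := by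
    rw [hexp]
    push_cast
    field_simp
    ring
  have hne2 : (2:ℂ) * (1 - ((θ * t : ℝ):ℂ) * Complex.I) ≠ 0 :=
    mul_ne_zero two_ne_zero (one_sub_mul_I_ne _)
  have hden : (((1+θ:ℝ):ℂ) + ((1-θ:ℝ):ℂ) * Complex.exp ((φ:ℂ) * Complex.I)) ≠ 0 := by
    intro h0
    exact hne2 (by rw [← hrelden, h0, zero_mul])
  refine ⟨hden, ?_⟩
  calc (((1-θ:ℝ):ℂ) + ((1+θ:ℝ):ℂ) * Complex.exp ((φ:ℂ) * Complex.I)) *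
      (((1+θ:ℝ):ℂ) + ((1-θ:ℝ):ℂ) * Complex.exp ((φ:ℂ) * Complex.I))⁻¹
      = (((1-θ:ℝ):ℂ) + ((1+θ:ℝ):ℂ) * Complex.exp ((φ:ℂ) * Complex.I)) /
        (((1+θ:ℝ):ℂ) + ((1-θ:ℝ):ℂ) * Complex.exp ((φ:ℂ) * Complex.I)) :=
        (div_eq_mul_inv _ _).symm
    _ = ((((1-θ:ℝ):ℂ) + ((1+θ:ℝ):ℂ) * Complex.exp ((φ:ℂ) * Complex.I)) *
          ((1:ℂ) - (t:ℂ) * Complex.I)) /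
        ((((1+θ:ℝ):ℂ) + ((1-θ:ℝ):ℂ) * Complex.exp ((φ:ℂ) * Complex.I)) *
          ((1:ℂ) - (t:ℂ) * Complex.I)) := (mul_div_mul_right _ _ h1).symm
    _ = (2 * (1 + ((θ * t : ℝ):ℂ) * Complex.I)) /
        (2 * (1 - ((θ * t : ℝ):ℂ) * Complex.I)) := by rw [hrelnum, hrelden]
    _ = (1 + ((θ * t : ℝ):ℂ) * Complex.I) / (1 - ((θ * t : ℝ):ℂ) * Complex.I) :=
        mul_div_mul_left _ _ two_ne_zero

/-- The Cayley-path deformation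
`F_θ(g) = ((1-θ)I + (1+θ)g) ((1+θ)I + (1-θ)g)⁻¹`. -/
noncomputable def cayleyPath {d : ℕ} (θ : ℝ) (g : Matrix (Fin d) (Fin d) ℂ) :
    Matrix (Fin d) (Fin d) ℂ :=
  (((1 - θ : ℝ) : ℂ) • (1 : Matrix (Fin d) (Fin d) ℂ) + ((1 + θ : ℝ) : ℂ) • g) *
    (((1 + θ : ℝ) : ℂ) • (1 : Matrix (Fin d) (Fin d) ℂ) + ((1 - θ : ℝ) : ℂ) • g)⁻¹

/-- For a unitary `g` with eigenvalues `e^{iφ_j}`, `φ_j ∈ (-π,π)`, and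
`θ ∈ (0,1]`, the matrix `F_θ(g)` is well-defined, unitary, equals `g` at
`θ = 1`, and its eigenvalues are `(1 + iθ tan(φ_j/2)) / (1 - iθ tan(φ_j/2))`. -/
theorem cayleyPath_unitary_eigenvalues {d : ℕ}
    (g h : Matrix (Fin d) (Fin d) ℂ)
    (hh : h ∈ Matrix.unitaryGroup (Fin d) ℂ)
    (φ : Fin d → ℝ) (hφ : ∀ j, φ j ∈ Set.Ioo (-Real.pi) Real.pi)
    (hg : g = h * Matrix.diagonal (fun j => Complex.exp ((φ j : ℂ) * Complex.I)) * hᴴ)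
    (θ : ℝ) (hθ : θ ∈ Set.Ioc (0 : ℝ) 1) :
    IsUnit (((1 + θ : ℝ) : ℂ) • (1 : Matrix (Fin d) (Fin d) ℂ) +
        ((1 - θ : ℝ) : ℂ) • g) ∧
    cayleyPath θ g ∈ Matrix.unitaryGroup (Fin d) ℂ ∧
    cayleyPath 1 g = g ∧
    cayleyPath θ g =
      h * Matrix.diagonal (fun j =>
        (1 + ((θ * Real.tan (φ j / 2) : ℝ) : ℂ) * Complex.I) /
          (1 - ((θ * Real.tan (φ j / 2) : ℝ) : ℂ) * Complex.I)) * hᴴ := by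
  have hh1 : h * hᴴ = 1 := (Matrix.mem_unitaryGroup_iff).1 hh
  have hh2 : hᴴ * h = 1 := (Matrix.mem_unitaryGroup_iff').1 hh
  set z : Fin d → ℂ := fun j => Complex.exp ((φ j : ℂ) * Complex.I) with hz
  -- conjugation of affine combinations
  have key : ∀ a b : ℂ, a • (1 : Matrix (Fin d) (Fin d) ℂ) + b • g
      = h * Matrix.diagonal (fun j => a + b * z j) * hᴴ := by
    intro a b
    have hdiag : Matrix.diagonal (fun j => a + b * z j)
        = a • (1 : Matrix (Fin d) (Fin d) ℂ) + b • Matrix.diagonal z := by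
      ext i j
      by_cases hij : i = j <;>
        simp [hij, Matrix.diagonal_apply, Matrix.one_apply]
    rw [hdiag, Matrix.mul_add, Matrix.add_mul, hg]
    rw [Matrix.mul_smul, Matrix.mul_one, Matrix.smul_mul, hh1,
      Matrix.mul_smul, Matrix.smul_mul]
  -- numerator and denominator diagonals
  set den : Fin d → ℂ := fun j => ((1+θ:ℝ):ℂ) + ((1-θ:ℝ):ℂ) * z j with hden
  set num : Fin d → ℂ := fun j => ((1-θ:ℝ):ℂ) + ((1+θ:ℝ):ℂ) * z j with hnum
  have hdenne : ∀ j, den j ≠ 0 := fun j => (scalar_main θ (φ j) (hφ j)).1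
  have hB : ((1 + θ : ℝ) : ℂ) • (1 : Matrix (Fin d) (Fin d) ℂ) + ((1 - θ : ℝ) : ℂ) • g
      = h * Matrix.diagonal den * hᴴ := key _ _
  have hN : ((1 - θ : ℝ) : ℂ) • (1 : Matrix (Fin d) (Fin d) ℂ) + ((1 + θ : ℝ) : ℂ) • g
      = h * Matrix.diagonal num * hᴴ := key _ _
  have hhdet : IsUnit h.det := by
    apply IsUnit.of_mul_eq_one hᴴ.det
    rw [← Matrix.det_mul, hh1, Matrix.det_one]
  have hhTdet : IsUnit hᴴ.det := by
    apply IsUnit.of_mul_eq_one h.det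
    rw [← Matrix.det_mul, hh2, Matrix.det_one]
  have hDdet : IsUnit (Matrix.diagonal den).det := by
    rw [Matrix.det_diagonal]
    exact isUnit_iff_ne_zero.2 (Finset.prod_ne_zero_iff.2 fun j _ => hdenne j)
  have hBunit : IsUnit (((1 + θ : ℝ) : ℂ) • (1 : Matrix (Fin d) (Fin d) ℂ) +
      ((1 - θ : ℝ) : ℂ) • g) := by
    apply (Matrix.isUnit_iff_isUnit_det _).2
    rw [hB, Matrix.det_mul, Matrix.det_mul]
    exact (hhdet.mul hDdet).mul hhTdet
  have hinvh : h⁻¹ = hᴴ := Matrix.inv_eq_right_inv hh1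
  have hinvhT : hᴴ⁻¹ = h := Matrix.inv_eq_right_inv hh2
  have hDinv : (Matrix.diagonal den)⁻¹ = Matrix.diagonal (fun j => (den j)⁻¹) := by
    apply Matrix.inv_eq_right_inv
    rw [Matrix.diagonal_mul_diagonal,
      show (fun j => den j * (den j)⁻¹) = fun _ : Fin d => (1:ℂ) from
        funext fun j => mul_inv_cancel₀ (hdenne j), Matrix.diagonal_one]
  have conjmul : ∀ A B : Matrix (Fin d) (Fin d) ℂ,
      (h * A * hᴴ) * (h * B * hᴴ) = h * (A * B) * hᴴ := by
    intro A B
    simp only [Matrix.mul_assoc]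
    rw [← Matrix.mul_assoc hᴴ h, hh2, Matrix.one_mul]
  have hBinv : (h * Matrix.diagonal den * hᴴ)⁻¹
      = h * Matrix.diagonal (fun j => (den j)⁻¹) * hᴴ := by
    rw [Matrix.mul_inv_rev, Matrix.mul_inv_rev, hinvh, hinvhT, hDinv, Matrix.mul_assoc]
  -- the main diagonalized form
  have hmain : cayleyPath θ g = h * Matrix.diagonal (fun j => num j * (den j)⁻¹) * hᴴ := by
    rw [cayleyPath, hN, hB, hBinv, conjmul, Matrix.diagonal_mul_diagonal]
  have htarget : (fun j => num j * (den j)⁻¹) = fun j =>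
      (1 + ((θ * Real.tan (φ j / 2) : ℝ) : ℂ) * Complex.I) /
        (1 - ((θ * Real.tan (φ j / 2) : ℝ) : ℂ) * Complex.I) := by
    funext j
    exact (scalar_main θ (φ j) (hφ j)).2
  set w : Fin d → ℂ := fun j =>
      (1 + ((θ * Real.tan (φ j / 2) : ℝ) : ℂ) * Complex.I) /
        (1 - ((θ * Real.tan (φ j / 2) : ℝ) : ℂ) * Complex.I) with hw
  have hmain' : cayleyPath θ g = h * Matrix.diagonal w * hᴴ := by
    rw [hmain, htarget]
  refine ⟨hBunit, ?_, ?_, hmain'⟩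
  · -- unitarity
    have hstar : (h * Matrix.diagonal w * hᴴ)ᴴ
        = h * Matrix.diagonal (star w) * hᴴ := by
      rw [Matrix.conjTranspose_mul, Matrix.conjTranspose_mul,
        Matrix.conjTranspose_conjTranspose, Matrix.diagonal_conjTranspose,
        ← Matrix.mul_assoc]
    rw [Matrix.mem_unitaryGroup_iff, hmain', Matrix.star_eq_conjTranspose, hstar,
      conjmul, Matrix.diagonal_mul_diagonal]
    have hconj : ∀ x : ℝ, star ((1 + (x:ℂ)*Complex.I)/(1 - (x:ℂ)*Complex.I))
        = (1 - (x:ℂ)*Complex.I)/(1 + (x:ℂ)*Complex.I) := by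
      intro x
      rw [star_div₀]
      congr 1 <;> simp [Complex.ext_iff]
    have hone : (fun j => w j * star w j) = fun _ : Fin d => (1:ℂ) := by
      funext j
      have h1 := one_sub_mul_I_ne (θ * Real.tan (φ j / 2))
      have h2 := one_add_mul_I_ne (θ * Real.tan (φ j / 2))
      simp only [hw, Pi.star_apply]
      rw [hconj, div_mul_div_comm, mul_comm ((1:ℂ) - _) ((1:ℂ) + _)]
      exact div_self (mul_ne_zero h2 h1)
    rw [hone, Matrix.diagonal_one, Matrix.mul_one, hh1]
  · -- θ = 1
    rw [cayleyPath]
    norm_num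
    have h2inv : ((2:ℂ) • (1 : Matrix (Fin d) (Fin d) ℂ))⁻¹
        = ((2:ℂ)⁻¹) • (1 : Matrix (Fin d) (Fin d) ℂ) := by
      apply Matrix.inv_eq_right_inv
      rw [Matrix.smul_mul, Matrix.mul_smul, smul_smul, Matrix.mul_one]
      norm_num
    rw [h2inv, Matrix.mul_smul, Matrix.mul_one, smul_smul]
    norm_num
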